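/- Suppose additionally d₀ = sup_{x∈X} ∫_Ω |g(ω)| ρ(f(x,ω), x) μ(dω) < ∞. Then for every bounded Lipschitz F : X → Y the unique Lipschitzian solution φ^F is also bounded, and ‖φ^F‖_BL ≤ d/|1 − γ| · ‖F‖_BL, where d = max{1, (d₀ + 1 + |γ|)/(1 − λ)}; the restricted solution operator is a linear homeomorphism of (BL(X,Y), ‖·‖_BL) onto itself. -/

import Mathlib

open MeasureTheory

/-- The smallest Lipschitz constant of a function. -/
noncomputable def lipConst {X : Type*} [MetricSpace X] {Y : Type*}
    [NormedAddCommGroup Y] (u : X → Y) : ℝ :=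
  sInf {K : ℝ | 0 ≤ K ∧ ∀ x z, ‖u x - u z‖ ≤ K * dist x z}

lemma lipConst_le {X : Type*} [MetricSpace X] {Y : Type*} [NormedAddCommGroup Y]
    {u : X → Y} {K : ℝ} (hK0 : 0 ≤ K) (hK : ∀ x z, ‖u x - u z‖ ≤ K * dist x z) :
    lipConst u ≤ K :=
  csInf_le ⟨0, fun _ h => h.1⟩ ⟨hK0, hK⟩

lemma lipConst_mem {X : Type*} [MetricSpace X] {Y : Type*} [NormedAddCommGroup Y]
    {u : X → Y} (h : ∃ K : ℝ, 0 ≤ K ∧ ∀ x z, ‖u x - u z‖ ≤ K * dist x z) :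
    0 ≤ lipConst u ∧ ∀ x z, ‖u x - u z‖ ≤ lipConst u * dist x z := by
  obtain ⟨K0, hK00, hK0⟩ := h
  have hne : Set.Nonempty {K : ℝ | 0 ≤ K ∧ ∀ x z, ‖u x - u z‖ ≤ K * dist x z} :=
    ⟨K0, hK00, hK0⟩
  have h0 : 0 ≤ lipConst u := le_csInf hne fun K hK => hK.1
  refine ⟨h0, fun x z => ?_⟩
  by_cases hxz : x = z
  · subst hxz; simp
  · have hdpos : 0 < dist x z := dist_pos.mpr hxz
    have hdiv : ‖u x - u z‖ / dist x z ≤ lipConst u :=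
      le_csInf hne fun K hK => (div_le_iff₀ hdpos).mpr (hK.2 x z)
    calc ‖u x - u z‖ = ‖u x - u z‖ / dist x z * dist x z := by field_simp
      _ ≤ lipConst u * dist x z := mul_le_mul_of_nonneg_right hdiv hdpos.le

lemma lipreal {X : Type*} [MetricSpace X] {Y : Type*} [NormedAddCommGroup Y]
    {u : X → Y} (h : ∃ K : NNReal, LipschitzWith K u) :
    ∃ K : ℝ, 0 ≤ K ∧ ∀ x z, ‖u x - u z‖ ≤ K * dist x z := by
  obtain ⟨K, hK⟩ := h
  exact ⟨K, K.coe_nonneg, fun x z => by rw [← dist_eq_norm]; exact hK.dist_le_mul x z⟩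
/-- Theorem 4.1(ii): if d₀ = sup_x ∫ |g| ρ(f(x,ω),x) dμ < ∞, the solution operator
maps bounded Lipschitz functions to bounded Lipschitz functions, is a linear
homeomorphism of (BL(X,Y), ‖·‖_BL) onto itself, and ‖φ^F‖_BL ≤ d/‖1−γ‖ ‖F‖_BL. -/
theorem stmt_13 {Ω : Type*} [MeasurableSpace Ω] (μ : MeasureTheory.Measure Ω)
    {X : Type*} [MetricSpace X] [TopologicalSpace.SeparableSpace X]
    [MeasurableSpace X] [BorelSpace X]
    {𝕂 : Type*} [RCLike 𝕂]
    {Y : Type*} [NormedAddCommGroup Y] [NormedSpace 𝕂 Y] [NormedSpace ℝ Y] [CompleteSpace Y]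
    (f : X → Ω → X) (g : Ω → 𝕂)
    (hf : ∀ x, Measurable (f x))
    (hg : Integrable g μ)
    (hint : ∀ x, Integrable (fun ω => ‖g ω‖ * dist (f x ω) x) μ)
    (lam : ℝ) (hlam : lam ∈ Set.Ico (0 : ℝ) 1)
    (hcontr : ∀ x z : X, (∫ ω, ‖g ω‖ * dist (f x ω) (f z ω) ∂μ) ≤ lam * dist x z)
    (γ : 𝕂) (hγ : γ = ∫ ω, g ω ∂μ) (hγ1 : γ ≠ 1)
    (d₀ d : ℝ)
    (hd₀ : ∀ x, (∫ ω, ‖g ω‖ * dist (f x ω) x ∂μ) ≤ d₀)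
    (hd₀sup : d₀ = ⨆ x : X, ∫ ω, ‖g ω‖ * dist (f x ω) x ∂μ)
    (hd : d = max 1 ((d₀ + 1 + ‖γ‖) / (1 - lam)))
    (T : (X → Y) → X → Y)
    (hT : ∀ F : X → Y, (∃ K : NNReal, LipschitzWith K F) →
      ((∃ K : NNReal, LipschitzWith K (T F)) ∧
        ∀ x, Integrable (fun ω => g ω • T F (f x ω)) μ ∧
          T F x = (∫ ω, g ω • T F (f x ω) ∂μ) + F x)) :
    (∀ F : X → Y, (∃ K : NNReal, LipschitzWith K F) → (∃ C, ∀ x, ‖F x‖ ≤ C) →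
      (∃ C, ∀ x, ‖T F x‖ ≤ C) ∧
        (⨆ x : X, ‖T F x‖) + lipConst (T F) ≤
          d / ‖1 - γ‖ * ((⨆ x : X, ‖F x‖) + lipConst F)) ∧
    (∀ F G : X → Y, (∃ K : NNReal, LipschitzWith K F) → (∃ C, ∀ x, ‖F x‖ ≤ C) →
      (∃ K : NNReal, LipschitzWith K G) → (∃ C, ∀ x, ‖G x‖ ≤ C) →
      T F = T G → F = G) ∧
    (∀ ψ : X → Y, (∃ K : NNReal, LipschitzWith K ψ) → (∃ C, ∀ x, ‖ψ x‖ ≤ C) →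
      ∃ F : X → Y, ((∃ K : NNReal, LipschitzWith K F) ∧ (∃ C, ∀ x, ‖F x‖ ≤ C)) ∧
        T F = ψ) := by
  -- basic facts
  obtain ⟨hlam0, hlam1⟩ := hlam
  have h1lam : 0 < 1 - lam := by linarith
  have hγne : (1 : 𝕂) - γ ≠ 0 := sub_ne_zero.mpr (Ne.symm hγ1)
  have hγ0 : (0 : ℝ) < ‖1 - γ‖ := by rwa [norm_pos_iff]
  haveI : SecondCountableTopology X := UniformSpace.secondCountable_of_separable X
  -- trivial case: X empty
  rcases isEmpty_or_nonempty X with hX | hX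
  · have hlip0 : ∀ u : X → Y, lipConst u = 0 := fun u =>
      le_antisymm (lipConst_le le_rfl fun x _ => isEmptyElim x)
        (lipConst_mem ⟨0, le_rfl, fun x _ => isEmptyElim x⟩).1
    have hsup0 : ∀ u : X → Y, (⨆ x : X, ‖u x‖) = 0 := fun u => by
      rw [Real.iSup_of_isEmpty]
    refine ⟨fun F _ _ => ⟨⟨0, fun x => isEmptyElim x⟩, ?_⟩,
      fun F G _ _ _ _ _ => funext fun x => isEmptyElim x,
      fun ψ h1 h2 => ⟨ψ, ⟨h1, h2⟩, funext fun x => isEmptyElim x⟩⟩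
    rw [hlip0, hlip0, hsup0, hsup0]
    simp
  -- X nonempty from here on
  obtain ⟨x₀⟩ := id hX
  have hd₀0 : 0 ≤ d₀ :=
    le_trans (integral_nonneg fun ω => mul_nonneg (norm_nonneg _) dist_nonneg) (hd₀ x₀)
  have hd1 : (1 : ℝ) ≤ d := hd ▸ le_max_left _ _
  have hd2 : (d₀ + 1 + ‖γ‖) ≤ d * (1 - lam) := by
    have : (d₀ + 1 + ‖γ‖) / (1 - lam) ≤ d := hd ▸ le_max_right _ _
    calc d₀ + 1 + ‖γ‖ = (d₀ + 1 + ‖γ‖) / (1 - lam) * (1 - lam) := by field_simp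
      _ ≤ d * (1 - lam) := mul_le_mul_of_nonneg_right this h1lam.le
  have hγle : ‖(1 : 𝕂) - γ‖ ≤ 1 + ‖γ‖ := by
    calc ‖(1 : 𝕂) - γ‖ ≤ ‖(1 : 𝕂)‖ + ‖γ‖ := norm_sub_le _ _
      _ = 1 + ‖γ‖ := by rw [norm_one]
  -- integrability of ω ↦ ‖g ω‖ * dist (f x ω) (f z ω)
  have hIdist : ∀ x z, Integrable (fun ω => ‖g ω‖ * dist (f x ω) (f z ω)) μ := by
    intro x z
    have hm : AEStronglyMeasurable (fun ω => ‖g ω‖ * dist (f x ω) (f z ω)) μ :=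
      hg.aestronglyMeasurable.norm.mul ((hf x).dist (hf z)).aestronglyMeasurable
    refine Integrable.mono' (((hint x).add (hg.norm.mul_const (dist x z))).add (hint z)) hm
      (Filter.Eventually.of_forall fun ω => ?_)
    have htri : dist (f x ω) (f z ω) ≤ dist (f x ω) x + dist x z + dist (f z ω) z := by
      calc dist (f x ω) (f z ω) ≤ dist (f x ω) z + dist z (f z ω) := dist_triangle _ _ _
        _ ≤ (dist (f x ω) x + dist x z) + dist z (f z ω) :=
          add_le_add_left (dist_triangle _ _ _) _
        _ = dist (f x ω) x + dist x z + dist (f z ω) z := by rw [dist_comm z]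
    have h0 : (0:ℝ) ≤ ‖g ω‖ * dist (f x ω) (f z ω) :=
      mul_nonneg (norm_nonneg _) dist_nonneg
    rw [Real.norm_of_nonneg h0]
    calc ‖g ω‖ * dist (f x ω) (f z ω)
        ≤ ‖g ω‖ * (dist (f x ω) x + dist x z + dist (f z ω) z) :=
          mul_le_mul_of_nonneg_left htri (norm_nonneg _)
      _ = ‖g ω‖ * dist (f x ω) x + ‖g ω‖ * dist x z + ‖g ω‖ * dist (f z ω) z := by ring
  -- key estimate on integral differences
  have intdiff : ∀ (u : X → Y) (Ku : ℝ), 0 ≤ Ku →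
      (∀ a b, ‖u a - u b‖ ≤ Ku * dist a b) →
      (∀ x, Integrable (fun ω => g ω • u (f x ω)) μ) →
      ∀ x z, ‖(∫ ω, g ω • u (f x ω) ∂μ) - ∫ ω, g ω • u (f z ω) ∂μ‖
        ≤ Ku * (lam * dist x z) := by
    intro u Ku hKu0 hKu hI x z
    rw [← integral_sub (hI x) (hI z)]
    calc ‖∫ ω, (g ω • u (f x ω) - g ω • u (f z ω)) ∂μ‖
        ≤ ∫ ω, Ku * (‖g ω‖ * dist (f x ω) (f z ω)) ∂μ := by
          refine norm_integral_le_of_norm_le ((hIdist x z).const_mul Ku)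
            (Filter.Eventually.of_forall fun ω => ?_)
          rw [← smul_sub, norm_smul]
          calc ‖g ω‖ * ‖u (f x ω) - u (f z ω)‖
              ≤ ‖g ω‖ * (Ku * dist (f x ω) (f z ω)) :=
              mul_le_mul_of_nonneg_left (hKu _ _) (norm_nonneg _)
            _ = Ku * (‖g ω‖ * dist (f x ω) (f z ω)) := by ring
      _ = Ku * ∫ ω, ‖g ω‖ * dist (f x ω) (f z ω) ∂μ := integral_const_mul _ _
      _ ≤ Ku * (lam * dist x z) := mul_le_mul_of_nonneg_left (hcontr x z) hKu0
  -- splitting the integral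
  have split : ∀ (φ : X → Y) (x : X), Integrable (fun ω => g ω • φ (f x ω)) μ →
      (∫ ω, g ω • φ (f x ω) ∂μ)
        = (∫ ω, g ω • (φ (f x ω) - φ x) ∂μ) + γ • φ x := by
    intro φ x hI
    have h2 : Integrable (fun ω => g ω • φ x) μ := hg.smul_const _
    have h3 : (∫ ω, g ω • (φ (f x ω) - φ x) ∂μ)
        = (∫ ω, g ω • φ (f x ω) ∂μ) - ∫ ω, g ω • φ x ∂μ := by
      rw [← integral_sub hI h2]
      congr 1; funext ω; rw [smul_sub]
    rw [h3, integral_smul_const, ← hγ]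
    abel
  -- estimate on ∫ g • (φ (f x ω) - φ x)
  have intnear : ∀ (φ : X → Y) (Kφ : ℝ), 0 ≤ Kφ →
      (∀ a b, ‖φ a - φ b‖ ≤ Kφ * dist a b) →
      ∀ x, ‖∫ ω, g ω • (φ (f x ω) - φ x) ∂μ‖ ≤ Kφ * d₀ := by
    intro φ Kφ hKφ0 hKφ x
    calc ‖∫ ω, g ω • (φ (f x ω) - φ x) ∂μ‖
        ≤ ∫ ω, Kφ * (‖g ω‖ * dist (f x ω) x) ∂μ := by
          refine norm_integral_le_of_norm_le ((hint x).const_mul Kφ)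
            (Filter.Eventually.of_forall fun ω => ?_)
          rw [norm_smul]
          calc ‖g ω‖ * ‖φ (f x ω) - φ x‖
              ≤ ‖g ω‖ * (Kφ * dist (f x ω) x) :=
              mul_le_mul_of_nonneg_left (hKφ _ _) (norm_nonneg _)
            _ = Kφ * (‖g ω‖ * dist (f x ω) x) := by ring
      _ = Kφ * ∫ ω, ‖g ω‖ * dist (f x ω) x ∂μ := integral_const_mul _ _
      _ ≤ Kφ * d₀ := mul_le_mul_of_nonneg_left (hd₀ x) hKφ0
  -- main quantitative estimate (part 1)
  have main : ∀ F : X → Y, (∃ K : NNReal, LipschitzWith K F) → (∃ C, ∀ x, ‖F x‖ ≤ C) →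
      (∃ C, ∀ x, ‖T F x‖ ≤ C) ∧
        (⨆ x : X, ‖T F x‖) + lipConst (T F) ≤
          d / ‖1 - γ‖ * ((⨆ x : X, ‖F x‖) + lipConst F) := by
    intro F hFlip hFbdd
    obtain ⟨hφlip, hTx⟩ := hT F hFlip
    have hI : ∀ x, Integrable (fun ω => g ω • T F (f x ω)) μ := fun x => (hTx x).1
    have heq : ∀ x, T F x = (∫ ω, g ω • T F (f x ω) ∂μ) + F x := fun x => (hTx x).2
    obtain ⟨hKF0, hKF⟩ := lipConst_mem (lipreal hFlip)
    obtain ⟨hKφ0, hKφ⟩ := lipConst_mem (lipreal hφlip)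
    -- contraction for the Lipschitz constant
    have hstep : ∀ x z, ‖T F x - T F z‖ ≤ (lam * lipConst (T F) + lipConst F) * dist x z := by
      intro x z
      have hdiffeq : T F x - T F z
          = ((∫ ω, g ω • T F (f x ω) ∂μ) - ∫ ω, g ω • T F (f z ω) ∂μ) + (F x - F z) := by
        rw [heq x, heq z]; abel
      rw [hdiffeq]
      calc ‖((∫ ω, g ω • T F (f x ω) ∂μ) - ∫ ω, g ω • T F (f z ω) ∂μ) + (F x - F z)‖
          ≤ ‖(∫ ω, g ω • T F (f x ω) ∂μ) - ∫ ω, g ω • T F (f z ω) ∂μ‖ + ‖F x - F z‖ :=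
            norm_add_le _ _
        _ ≤ lipConst (T F) * (lam * dist x z) + lipConst F * dist x z :=
            add_le_add (intdiff (T F) _ hKφ0 hKφ hI x z) (hKF x z)
        _ = (lam * lipConst (T F) + lipConst F) * dist x z := by ring
    have hc : lipConst (T F) ≤ lam * lipConst (T F) + lipConst F :=
      lipConst_le (by positivity) hstep
    have hKle : lipConst (T F) ≤ lipConst F / (1 - lam) := by
      rw [le_div_iff₀ h1lam]; nlinarith
    -- sup norm of F
    obtain ⟨C, hC⟩ := hFbdd
    have hbdd : BddAbove (Set.range fun x => ‖F x‖) := ⟨C, by rintro _ ⟨y, rfl⟩; exact hC y⟩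
    have hM : ∀ x, ‖F x‖ ≤ ⨆ x : X, ‖F x‖ := fun x => le_ciSup hbdd x
    have hM0 : 0 ≤ ⨆ x : X, ‖F x‖ := le_trans (norm_nonneg _) (hM x₀)
    -- pointwise bound on T F
    have hφbd : ∀ x, ‖T F x‖ ≤ (lipConst (T F) * d₀ + ⨆ x : X, ‖F x‖) / ‖1 - γ‖ := by
      intro x
      have heq2 : (1 - γ) • T F x = (∫ ω, g ω • (T F (f x ω) - T F x) ∂μ) + F x := by
        have h1 := heq x
        rw [split (T F) x (hI x)] at h1
        rw [sub_smul, one_smul, sub_eq_iff_eq_add]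
        conv_lhs => rw [h1]
        abel
      have h3 : ‖1 - γ‖ * ‖T F x‖ ≤ lipConst (T F) * d₀ + ⨆ x : X, ‖F x‖ := by
        rw [← norm_smul, heq2]
        calc ‖(∫ ω, g ω • (T F (f x ω) - T F x) ∂μ) + F x‖
            ≤ ‖∫ ω, g ω • (T F (f x ω) - T F x) ∂μ‖ + ‖F x‖ := norm_add_le _ _
          _ ≤ lipConst (T F) * d₀ + ⨆ x : X, ‖F x‖ :=
            add_le_add (intnear (T F) _ hKφ0 hKφ x) (hM x)
      rw [le_div_iff₀ hγ0, mul_comm]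
      exact h3
    refine ⟨⟨_, hφbd⟩, ?_⟩
    have hsup : (⨆ x : X, ‖T F x‖) ≤ (lipConst (T F) * d₀ + ⨆ x : X, ‖F x‖) / ‖1 - γ‖ :=
      ciSup_le hφbd
    rw [div_mul_eq_mul_div, le_div_iff₀ hγ0]
    have e1 : (⨆ x : X, ‖T F x‖) * ‖1 - γ‖ ≤ lipConst (T F) * d₀ + ⨆ x : X, ‖F x‖ :=
      (le_div_iff₀ hγ0).mp hsup
    have e2 : lipConst (T F) * ‖1 - γ‖ ≤ lipConst (T F) * (1 + ‖γ‖) :=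
      mul_le_mul_of_nonneg_left hγle hKφ0
    have e3 : lipConst (T F) * (d₀ + 1 + ‖γ‖) ≤ lipConst F / (1 - lam) * (d * (1 - lam)) := by
      apply mul_le_mul hKle hd2 (by positivity) (by positivity)
    have e4 : lipConst F / (1 - lam) * (d * (1 - lam)) = d * lipConst F := by
      field_simp
    nlinarith [hM0, hKφ0, hKF0, hd₀0]
  refine ⟨main, ?_, ?_⟩
  -- injectivity
  · intro F G hF _ hG _ hTFG
    funext x
    have e1 := ((hT F hF).2 x).2
    have e2 := ((hT G hG).2 x).2
    rw [hTFG] at e1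
    exact add_left_cancel (e1.symm.trans e2)
  -- surjectivity
  · intro ψ hψlip hψbdd
    obtain ⟨Cψ, hCψ⟩ := hψbdd
    obtain ⟨Kψn, hψlipW⟩ := id hψlip
    have hψcont : Continuous ψ := hψlipW.continuous
    obtain ⟨hKψ0, hKψ⟩ := lipConst_mem (lipreal hψlip)
    -- integrability of g • ψ (f x ·)
    have hIψ : ∀ x, Integrable (fun ω => g ω • ψ (f x ω)) μ := by
      intro x
      have hm : AEStronglyMeasurable (fun ω => g ω • ψ (f x ω)) μ :=
        hg.aestronglyMeasurable.smul
          ((hψcont.comp_stronglyMeasurable (hf x).stronglyMeasurable).aestronglyMeasurable)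
      refine Integrable.mono' (hg.norm.mul_const Cψ) hm
        (Filter.Eventually.of_forall fun ω => ?_)
      rw [norm_smul]
      exact mul_le_mul_of_nonneg_left (hCψ _) (norm_nonneg _)
    -- define F
    set F : X → Y := fun x => ψ x - ∫ ω, g ω • ψ (f x ω) ∂μ with hFdef
    have hψeq : ∀ x, ψ x = (∫ ω, g ω • ψ (f x ω) ∂μ) + F x := by
      intro x; simp only [hFdef]; abel
    -- F is Lipschitz
    have hFlipr : ∀ x z, ‖F x - F z‖ ≤ (lipConst ψ * (1 + lam)) * dist x z := by
      intro x z
      have hde : F x - F z = (ψ x - ψ z)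
          - ((∫ ω, g ω • ψ (f x ω) ∂μ) - ∫ ω, g ω • ψ (f z ω) ∂μ) := by
        simp only [hFdef]; abel
      rw [hde]
      calc ‖(ψ x - ψ z) - ((∫ ω, g ω • ψ (f x ω) ∂μ) - ∫ ω, g ω • ψ (f z ω) ∂μ)‖
          ≤ ‖ψ x - ψ z‖ + ‖(∫ ω, g ω • ψ (f x ω) ∂μ) - ∫ ω, g ω • ψ (f z ω) ∂μ‖ :=
            norm_sub_le _ _
        _ ≤ lipConst ψ * dist x z + lipConst ψ * (lam * dist x z) :=
            add_le_add (hKψ x z) (intdiff ψ _ hKψ0 hKψ hIψ x z)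
        _ = (lipConst ψ * (1 + lam)) * dist x z := by ring
    have hFlip : ∃ K : NNReal, LipschitzWith K F := by
      refine ⟨(lipConst ψ * (1 + lam)).toNNReal, LipschitzWith.of_dist_le_mul fun x z => ?_⟩
      rw [dist_eq_norm, Real.coe_toNNReal _ (by positivity)]
      exact hFlipr x z
    -- F is bounded
    have hCψ0 : 0 ≤ Cψ := le_trans (norm_nonneg _) (hCψ x₀)
    have hFbdd : ∃ C, ∀ x, ‖F x‖ ≤ C := by
      refine ⟨Cψ + (∫ ω, ‖g ω‖ ∂μ) * Cψ, fun x => ?_⟩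
      simp only [hFdef]
      calc ‖ψ x - ∫ ω, g ω • ψ (f x ω) ∂μ‖
          ≤ ‖ψ x‖ + ‖∫ ω, g ω • ψ (f x ω) ∂μ‖ := norm_sub_le _ _
        _ ≤ Cψ + (∫ ω, ‖g ω‖ ∂μ) * Cψ := by
            refine add_le_add (hCψ x) ?_
            calc ‖∫ ω, g ω • ψ (f x ω) ∂μ‖ ≤ ∫ ω, ‖g ω‖ * Cψ ∂μ := by
                  refine norm_integral_le_of_norm_le (hg.norm.mul_const Cψ)
                    (Filter.Eventually.of_forall fun ω => ?_)
                  rw [norm_smul]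
                  exact mul_le_mul_of_nonneg_left (hCψ _) (norm_nonneg _)
              _ = (∫ ω, ‖g ω‖ ∂μ) * Cψ := by rw [integral_mul_const]
    refine ⟨F, ⟨hFlip, hFbdd⟩, ?_⟩
    -- T F = ψ via uniqueness
    obtain ⟨hφlip, hTx⟩ := hT F hFlip
    have hIφ : ∀ x, Integrable (fun ω => g ω • T F (f x ω)) μ := fun x => (hTx x).1
    have hφeq : ∀ x, T F x = (∫ ω, g ω • T F (f x ω) ∂μ) + F x := fun x => (hTx x).2
    set u : X → Y := fun x => T F x - ψ x with hudef
    have hIu : ∀ x, Integrable (fun ω => g ω • u (f x ω)) μ := by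
      intro x
      have : (fun ω => g ω • u (f x ω))
          = fun ω => g ω • T F (f x ω) - g ω • ψ (f x ω) := by
        funext ω; simp only [hudef, smul_sub]
      rw [this]
      exact (hIφ x).sub (hIψ x)
    have hueq : ∀ x, u x = ∫ ω, g ω • u (f x ω) ∂μ := by
      intro x
      have h1 : (∫ ω, g ω • u (f x ω) ∂μ)
          = (∫ ω, g ω • T F (f x ω) ∂μ) - ∫ ω, g ω • ψ (f x ω) ∂μ := by
        rw [← integral_sub (hIφ x) (hIψ x)]
        congr 1; funext ω; simp only [hudef, smul_sub]
      rw [h1]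
      simp only [hudef]
      conv_lhs => rw [hφeq x, hψeq x]
      abel
    -- u has a real Lipschitz bound
    obtain ⟨Kφr, hKφr0, hKφr⟩ := lipreal hφlip
    have hur : ∃ K : ℝ, 0 ≤ K ∧ ∀ x z, ‖u x - u z‖ ≤ K * dist x z := by
      refine ⟨Kφr + lipConst ψ, by positivity, fun x z => ?_⟩
      have : u x - u z = (T F x - T F z) - (ψ x - ψ z) := by simp only [hudef]; abel
      rw [this]
      calc ‖(T F x - T F z) - (ψ x - ψ z)‖ ≤ ‖T F x - T F z‖ + ‖ψ x - ψ z‖ := norm_sub_le _ _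
        _ ≤ Kφr * dist x z + lipConst ψ * dist x z := add_le_add (hKφr x z) (hKψ x z)
        _ = (Kφr + lipConst ψ) * dist x z := by ring
    obtain ⟨hKu0, hKu⟩ := lipConst_mem hur
    -- lipConst u = 0
    have hstepu : ∀ x z, ‖u x - u z‖ ≤ (lam * lipConst u) * dist x z := by
      intro x z
      have : u x - u z = (∫ ω, g ω • u (f x ω) ∂μ) - ∫ ω, g ω • u (f z ω) ∂μ := by
        rw [hueq x, hueq z]
      rw [this]
      calc ‖(∫ ω, g ω • u (f x ω) ∂μ) - ∫ ω, g ω • u (f z ω) ∂μ‖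
          ≤ lipConst u * (lam * dist x z) := intdiff u _ hKu0 hKu hIu x z
        _ = (lam * lipConst u) * dist x z := by ring
    have hKu1 : lipConst u ≤ lam * lipConst u := lipConst_le (by positivity) hstepu
    have hKu2 : lipConst u = 0 := le_antisymm (by nlinarith) hKu0
    have hconst : ∀ a b : X, u a = u b := by
      intro a b
      have h := hKu a b
      rw [hKu2, zero_mul] at h
      exact sub_eq_zero.mp (norm_le_zero_iff.mp h)
    have huzero : ∀ x, u x = 0 := by
      intro x
      have h1 : (∫ ω, g ω • u (f x ω) ∂μ) = γ • u x := by
        have he : (fun ω => g ω • u (f x ω)) = fun ω => g ω • u x := by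
          funext ω; rw [hconst (f x ω) x]
        rw [he, integral_smul_const, ← hγ]
      have h2 : (1 - γ) • u x = 0 := by
        rw [sub_smul, one_smul, sub_eq_zero]
        exact (hueq x).trans h1
      rcases smul_eq_zero.mp h2 with h | h
      · exact absurd h hγne
      · exact h
    funext x
    have hz := huzero x
    simp only [hudef] at hz
    exact sub_eq_zero.mp hz
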